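/- arXiv:1310.0192 — 3 statements merged into one kernel-verified Lean document; each statement's English description precedes it below -/
import Mathlib

section
/- For any continuous function y: [0,∞) → [0,∞) and any initial condition ā ∈ [0,∞)^{K+1}, the ODE x'(t) = F(y(t), x(t)), x(0) = ā, where F is defined by F_0(y,x) = F_{K+1}(y,x) = x_K, F_2(y,x) = y + (γ₂ - x₀)x₂, and F_k(y,x) = x_{k-1} + (γ_k - x₀)x_k for k = 3,…,K, has a unique solution defined on all of [0,∞). -/
open Set Filter

namespace OdeAux

open Topology

noncomputable section

/-- clamp to `[0, B]` -/
def cl (B s : ℝ) : ℝ := max 0 (min B s)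

lemma cl_nonneg (B s : ℝ) : 0 ≤ cl B s := le_max_left _ _

lemma cl_le {s : ℝ} (B : ℝ) (hs : 0 ≤ s) : cl B s ≤ s := max_le hs (min_le_right _ _)

lemma cl_le_B {B : ℝ} (hB : 0 ≤ B) (s : ℝ) : cl B s ≤ B := max_le hB (min_le_left _ _)

lemma cl_abs_le {B : ℝ} (hB : 0 ≤ B) (s : ℝ) : |cl B s| ≤ B :=
  abs_le.2 ⟨by linarith [cl_nonneg B s], cl_le_B hB s⟩

lemma cl_eq {B s : ℝ} (h0 : 0 ≤ s) (hB : s ≤ B) : cl B s = s := by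
  unfold cl; rw [min_eq_right hB, max_eq_right h0]

lemma cl_eq_zero {B s : ℝ} (hs : s ≤ 0) : cl B s = 0 :=
  max_eq_left ((min_le_right B s).trans hs)

lemma abs_cl_sub_cl (B a b : ℝ) : |cl B a - cl B b| ≤ |a - b| := by
  unfold cl
  rw [max_comm 0 (min B a), max_comm 0 (min B b)]
  refine (abs_max_sub_max_le_abs _ _ _).trans ?_
  simpa using (abs_min_sub_min_le_max B a B b).trans (by simp)

/-- The (untruncated) vector field. -/
def Ft (γ : ℕ → ℝ) (y : ℝ → ℝ) (K : ℕ) (t : ℝ) (v : Fin K → ℝ) : Fin K → ℝ := fun i =>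
  if (i : ℕ) = 0 then (if K = 1 then y t else v ⟨K - 1, Nat.sub_lt i.pos one_pos⟩)
  else (if (i : ℕ) = 1 then y t
        else v ⟨(i : ℕ) - 1, lt_of_le_of_lt (Nat.sub_le _ _) i.isLt⟩)
    + (γ ((i : ℕ) + 1) - v ⟨0, i.pos⟩) * v i

lemma key_est {c v0 vi w0 wi A A' G R D : ℝ} (hG0 : 0 ≤ G) (hR : 0 ≤ R)
    (hc : |c| ≤ G) (hv0 : |v0| ≤ R) (hwi : |wi| ≤ R)
    (hAA : |A - A'| ≤ D) (h1 : |vi - wi| ≤ D) (h2 : |v0 - w0| ≤ D) :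
    |(A + (c - v0) * vi) - (A' + (c - w0) * wi)| ≤ (1 + G + 2 * R) * D := by
  have e : (A + (c - v0) * vi) - (A' + (c - w0) * wi)
      = ((A - A') + c * (vi - wi)) - (v0 * (vi - wi) + wi * (v0 - w0)) := by ring
  rw [e]
  have h3 : |((A - A') + c * (vi - wi)) - (v0 * (vi - wi) + wi * (v0 - w0))|
      ≤ |A - A'| + |c| * |vi - wi| + (|v0| * |vi - wi| + |wi| * |v0 - w0|) :=
    (abs_sub _ _).trans (add_le_add ((abs_add_le _ _).trans (by rw [abs_mul]))
      ((abs_add_le _ _).trans (by rw [abs_mul, abs_mul])))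
  have m1 : |c| * |vi - wi| ≤ G * D := mul_le_mul hc h1 (abs_nonneg _) hG0
  have m2 : |v0| * |vi - wi| ≤ R * D := mul_le_mul hv0 h1 (abs_nonneg _) hR
  have m3 : |wi| * |v0 - w0| ≤ R * D := mul_le_mul hwi h2 (abs_nonneg _) hR
  nlinarith

lemma Ft_lip_component {K : ℕ} (γ : ℕ → ℝ) (y : ℝ → ℝ) (t : ℝ) {G R D : ℝ}
    (hG : ∀ i : Fin K, |γ ((i : ℕ) + 1)| ≤ G) (hG0 : 0 ≤ G) (hR : 0 ≤ R) (hD : 0 ≤ D)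
    {v w : Fin K → ℝ} (hv : ∀ j, |v j| ≤ R) (hw : ∀ j, |w j| ≤ R)
    (hvw : ∀ j, |v j - w j| ≤ D) (i : Fin K) :
    |Ft γ y K t v i - Ft γ y K t w i| ≤ (1 + G + 2 * R) * D := by
  unfold Ft
  split_ifs with h0 h1 h1
  · simpa using by positivity
  · exact (hvw _).trans (by nlinarith)
  · exact key_est hG0 hR (hG i) (hv _) (hw _) (by simpa using hD) (hvw _) (hvw _)
  · exact key_est hG0 hR (hG i) (hv _) (hw _) (hvw _) (hvw _) (hvw _)

lemma est2 {c v0 vi A Y G R : ℝ} (hA : |A| ≤ Y)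
    (hc : |c| ≤ G) (hv0 : |v0| ≤ R) (hvi : |vi| ≤ R) (hR : 0 ≤ R) :
    |A + (c - v0) * vi| ≤ Y + (G + R) * R := by
  have := (abs_add_le A ((c - v0) * vi)).trans (add_le_add hA (le_of_eq (abs_mul _ _)))
  have h2 : |c - v0| * |vi| ≤ (G + R) * R :=
    mul_le_mul ((abs_sub _ _).trans (add_le_add hc hv0)) hvi (abs_nonneg _)
      (by linarith [(abs_nonneg c).trans hc])
  linarith

lemma Ft_bound_component {K : ℕ} (γ : ℕ → ℝ) (y : ℝ → ℝ) (t : ℝ) {Y G R : ℝ}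
    (hyt : |y t| ≤ Y) (hY : 0 ≤ Y)
    (hG : ∀ i : Fin K, |γ ((i : ℕ) + 1)| ≤ G) (hG0 : 0 ≤ G) (hR : 0 ≤ R)
    {v : Fin K → ℝ} (hv : ∀ j, |v j| ≤ R) (i : Fin K) :
    |Ft γ y K t v i| ≤ Y + R + (G + R) * R := by
  unfold Ft
  split_ifs with h0 h1 h1
  · nlinarith
  · have := hv ⟨K - 1, Nat.sub_lt i.pos one_pos⟩
    nlinarith
  · have := est2 hyt (hG i) (hv ⟨0, i.pos⟩) (hv i) hR
    linarith
  · have := est2 (hv ⟨(i : ℕ) - 1, lt_of_le_of_lt (Nat.sub_le _ _) i.isLt⟩)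
      (hG i) (hv ⟨0, i.pos⟩) (hv i) hR
    linarith
def Gt (γ : ℕ → ℝ) (y : ℝ → ℝ) (K : ℕ) (B : ℝ) (t : ℝ) (v : Fin K → ℝ) : Fin K → ℝ :=
  Ft γ y K t (fun j => cl B (v j))
lemma nonneg_invariant {T : ℝ} {u u' : ℝ → ℝ}
    (hc : ContinuousOn u (Icc 0 T)) (h0 : 0 ≤ u 0)
    (hd : ∀ s ∈ Ioo (0:ℝ) T, HasDerivAt u (u' s) s)
    (hpos : ∀ s ∈ Ioo (0:ℝ) T, u s ≤ 0 → 0 ≤ u' s) :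
    ∀ t ∈ Icc (0:ℝ) T, 0 ≤ u t := by
  by_contra hcon
  push_neg at hcon
  obtain ⟨t₁, ht₁, hlt⟩ := hcon
  have ht₁0 : 0 < t₁ := by
    rcases (lt_or_eq_of_le ht₁.1).symm with h | h
    · rw [← h] at hlt; linarith
    · exact h
  set S : Set ℝ := Icc 0 t₁ ∩ u ⁻¹' (Ici 0) with hS
  have hScl : IsClosed S :=
    (hc.mono (Icc_subset_Icc_right ht₁.2)).preimage_isClosed_of_isClosed
      isClosed_Icc isClosed_Ici
  have hScomp : IsCompact S :=
    isCompact_Icc.of_isClosed_subset hScl inter_subset_left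
  have hSne : S.Nonempty := ⟨0, ⟨le_refl _, ht₁0.le⟩, h0⟩
  set t₀ := sSup S with ht₀def
  have ht₀S : t₀ ∈ S := hScomp.sSup_mem hSne
  have ht₀u : 0 ≤ u t₀ := ht₀S.2
  have ht₀mem : t₀ ∈ Icc 0 t₁ := ht₀S.1
  have ht₀lt : t₀ < t₁ := by
    rcases lt_or_eq_of_le ht₀mem.2 with h | h
    · exact h
    · exfalso; rw [h] at ht₀u; linarith
  have hneg : ∀ s ∈ Ioc t₀ t₁, u s < 0 := by
    intro s hs
    by_contra hns
    push_neg at hns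
    have hsS : s ∈ S := ⟨⟨ht₀mem.1.trans hs.1.le, hs.2⟩, hns⟩
    have := le_csSup hScomp.bddAbove hsS
    linarith [hs.1]
  have hsub : Ioo t₀ t₁ ⊆ Ioo 0 T :=
    fun s hs => ⟨lt_of_le_of_lt ht₀mem.1 hs.1, lt_of_lt_of_le hs.2 ht₁.2⟩
  have hmono : MonotoneOn u (Icc t₀ t₁) := by
    apply monotoneOn_of_deriv_nonneg (convex_Icc _ _)
    · exact hc.mono (Icc_subset_Icc ht₀mem.1 ht₁.2)
    · intro s hs
      rw [interior_Icc] at hs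
      exact ((hd s (hsub hs)).differentiableAt).differentiableWithinAt
    · intro s hs
      rw [interior_Icc] at hs
      rw [(hd s (hsub hs)).deriv]
      exact hpos s (hsub hs) (hneg s ⟨hs.1, hs.2.le⟩).le
  have := hmono ⟨le_refl _, ht₀lt.le⟩ ⟨ht₀lt.le, le_refl _⟩ ht₀lt.le
  linarith

lemma exists_sol_Icc (K : ℕ) (hK : 1 ≤ K) (γ : ℕ → ℝ) (y : ℝ → ℝ) (hyc : Continuous y)
    (hy : ∀ t ≥ (0:ℝ), 0 ≤ y t) (a0 : Fin K → ℝ) (ha0 : ∀ i, 0 ≤ a0 i)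
    (T : ℝ) (hT : 0 < T) :
    ∃ v : ℝ → Fin K → ℝ, v 0 = a0 ∧
      ∀ t ∈ Icc (0:ℝ) T, HasDerivWithinAt v (Ft γ y K t (v t)) (Icc 0 T) t := by
  obtain ⟨Y, hY⟩ :=
    (isCompact_Icc (a := (0:ℝ)) (b := T)).exists_bound_of_continuousOn hyc.continuousOn
  have hY0 : 0 ≤ Y := (norm_nonneg (y 0)).trans (hY 0 ⟨le_refl _, hT.le⟩)
  have hYt : ∀ t ∈ Icc (0:ℝ) T, |y t| ≤ Y := fun t ht => hY t ht
  set G : ℝ := ∑ k ∈ Finset.range (K + 1), |γ k| with hGdef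
  have hG0 : 0 ≤ G := Finset.sum_nonneg fun _ _ => abs_nonneg _
  have hGk : ∀ i : Fin K, |γ ((i : ℕ) + 1)| ≤ G := fun i =>
    Finset.single_le_sum (f := fun k => |γ k|) (fun _ _ => abs_nonneg _)
      (Finset.mem_range.2 (by have := i.isLt; omega))
  set δ : ℝ := ∑ i, a0 i with hδdef
  have hδ0 : 0 ≤ δ := Finset.sum_nonneg fun i _ => ha0 i
  set K₀ : ℝ := K * (1 + G) with hK₀def
  have hKpos : (0:ℝ) < K := by exact_mod_cast Nat.pos_of_ne_zero (by omega)
  have hK₀pos : 0 < K₀ := mul_pos hKpos (by linarith)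
  set ε : ℝ := K * Y with hεdef
  have hε0 : 0 ≤ ε := mul_nonneg hKpos.le hY0
  set B : ℝ := (δ + ε / K₀ + 1) * Real.exp (K₀ * T) with hBdef
  have hB0 : 0 ≤ B := by positivity
  have hgronB : ∀ t ∈ Icc (0:ℝ) T, gronwallBound δ K₀ ε t ≤ B := by
    intro t ht
    simp only [gronwallBound_of_K_ne_0 hK₀pos.ne']
    have h1 : Real.exp (K₀ * t) ≤ Real.exp (K₀ * T) :=
      Real.exp_le_exp.2 (mul_le_mul_of_nonneg_left ht.2 hK₀pos.le)
    have h3 : 0 ≤ ε / K₀ := div_nonneg hε0 hK₀pos.le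
    rw [hBdef]
    nlinarith [Real.exp_pos (K₀ * T), Real.exp_pos (K₀ * t),
      mul_le_mul_of_nonneg_left h1 hδ0, mul_le_mul_of_nonneg_left h1 h3]
  set C : ℝ := Y + B + (G + B) * B with hCdef
  have hC0 : 0 ≤ C := by positivity
  set L : NNReal := Real.toNNReal (1 + G + 2 * B) with hLdef
  have hL : ((L : ℝ)) = 1 + G + 2 * B := Real.coe_toNNReal _ (by linarith)
  have hclv : ∀ (x : Fin K → ℝ) (j : Fin K), |cl B (x j)| ≤ B := fun x j => cl_abs_le hB0 _
  have hpl : IsPicardLindelof (Gt γ y K B) (⟨0, le_refl _, hT.le⟩ : Icc (0:ℝ) T) a0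
      (C * T).toNNReal 0 C.toNNReal L := by
    refine ⟨?_, ?_, ?_, ?_⟩
    · intro t _
      apply LipschitzWith.lipschitzOnWith
      apply LipschitzWith.of_dist_le_mul
      intro v w
      rw [hL, dist_pi_le_iff (by positivity)]
      intro i
      rw [Real.dist_eq]
      have hvw : ∀ j, |cl B (v j) - cl B (w j)| ≤ dist v w := fun j => by
        refine (abs_cl_sub_cl B _ _).trans ?_
        rw [← Real.dist_eq]
        exact dist_le_pi_dist v w j
      exact Ft_lip_component γ y t hGk hG0 hB0 dist_nonneg (hclv v) (hclv w) hvw i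
    · intro x _
      apply Continuous.continuousOn
      apply continuous_pi
      intro i
      unfold Gt Ft
      dsimp only
      split_ifs
      · exact hyc
      · exact continuous_const
      · exact hyc.add continuous_const
      · exact continuous_const.add continuous_const
    · intro t ht x _
      rw [Real.coe_toNNReal _ hC0, pi_norm_le_iff_of_nonneg hC0]
      intro i
      rw [Real.norm_eq_abs]
      exact Ft_bound_component γ y t (hYt t ht) hY0 hGk hG0 hB0 (hclv x) i
    · rw [Real.coe_toNNReal _ hC0, Real.coe_toNNReal _ (mul_nonneg hC0 hT.le)]
      simp [max_eq_left hT.le]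
  obtain ⟨v, hv0, hvd⟩ : ∃ v : ℝ → Fin K → ℝ, v 0 = a0 ∧
      ∀ t ∈ Icc (0:ℝ) T, HasDerivWithinAt v (Gt γ y K B t (v t)) (Icc 0 T) t :=
    hpl.exists_eq_forall_mem_Icc_hasDerivWithinAt₀
  have hvc : ContinuousOn v (Icc 0 T) := fun t ht => (hvd t ht).continuousWithinAt
  have hcompd : ∀ (i : Fin K), ∀ t ∈ Icc (0:ℝ) T,
      HasDerivWithinAt (fun s => v s i) (Gt γ y K B t (v t) i) (Icc 0 T) t :=
    fun i t ht => hasDerivWithinAt_pi.1 (hvd t ht) i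
  have hnn : ∀ t ∈ Icc (0:ℝ) T, ∀ i, 0 ≤ v t i := by
    intro t ht i
    refine nonneg_invariant (u := fun s => v s i) (u' := fun s => Gt γ y K B s (v s) i)
      ((continuous_apply i).comp_continuousOn hvc) (show (0:ℝ) ≤ v 0 i by rw [hv0]; exact ha0 i) ?_ ?_ t ht
    · intro s hs
      exact (hcompd i s ⟨hs.1.le, hs.2.le⟩).hasDerivAt (Icc_mem_nhds hs.1 hs.2)
    · intro s hs hneg
      unfold Gt Ft
      dsimp only
      have hcl0 : cl B (v s i) = 0 := cl_eq_zero hneg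
      split_ifs with h0 h1
      · exact hy s hs.1.le
      · exact cl_nonneg _ _
      · rw [hcl0, mul_zero, add_zero]; exact hy s hs.1.le
      · rw [hcl0, mul_zero, add_zero]; exact cl_nonneg _ _
  set sf : ℝ → ℝ := fun t => ∑ i, v t i with hsfdef
  have hsfc : ContinuousOn sf (Icc 0 T) :=
    (continuous_finset_sum Finset.univ fun i _ => continuous_apply i).comp_continuousOn hvc
  have hsfd : ∀ t ∈ Ico (0:ℝ) T,
      HasDerivWithinAt sf (∑ i, Gt γ y K B t (v t) i) (Ici t) t := by
    intro t ht
    exact HasDerivWithinAt.fun_sum fun i _ =>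
      ((hcompd i t (Ico_subset_Icc_self ht)).mono_of_mem_nhdsWithin (Icc_mem_nhdsGE_of_mem ht))
  have hsum_le : ∀ t ∈ Ico (0:ℝ) T, (∑ i, Gt γ y K B t (v t) i) ≤ K₀ * sf t + ε := by
    intro t ht
    have htI : t ∈ Icc (0:ℝ) T := Ico_subset_Icc_self ht
    have hnnt : ∀ i, 0 ≤ v t i := hnn t htI
    have hsle : ∀ j : Fin K, v t j ≤ sf t := fun j =>
      Finset.single_le_sum (fun i _ => hnnt i) (Finset.mem_univ j)
    have hs0 : 0 ≤ sf t := Finset.sum_nonneg fun i _ => hnnt i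
    have hyY : y t ≤ Y := (le_abs_self _).trans (hYt t htI)
    have hcle : ∀ j, cl B (v t j) ≤ sf t := fun j => (cl_le B (hnnt j)).trans (hsle j)
    have hcomp : ∀ i, Gt γ y K B t (v t) i ≤ Y + (1 + G) * sf t := by
      intro i
      unfold Gt Ft
      dsimp only
      have hprod : (γ ((i : ℕ) + 1) - cl B (v t ⟨0, i.pos⟩)) * cl B (v t i) ≤ G * sf t := by
        have h1 : γ ((i : ℕ) + 1) - cl B (v t ⟨0, i.pos⟩) ≤ G := by
          have h2 := abs_le.1 (hGk i)
          have h3 := cl_nonneg B (v t ⟨0, i.pos⟩)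
          linarith [h2.2]
        calc (γ ((i : ℕ) + 1) - cl B (v t ⟨0, i.pos⟩)) * cl B (v t i)
            ≤ G * cl B (v t i) := mul_le_mul_of_nonneg_right h1 (cl_nonneg _ _)
          _ ≤ G * sf t := mul_le_mul_of_nonneg_left (hcle i) hG0
      have hGs : 0 ≤ G * sf t := mul_nonneg hG0 hs0
      have hexp : Y + (1 + G) * sf t = Y + sf t + G * sf t := by ring
      split_ifs with h0 h1
      · linarith
      · have := hcle ⟨K - 1, Nat.sub_lt i.pos one_pos⟩; linarith
      · linarith
      · have := hcle ⟨(i : ℕ) - 1, lt_of_le_of_lt (Nat.sub_le _ _) i.isLt⟩; linarith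
    calc (∑ i, Gt γ y K B t (v t) i) ≤ ∑ _i : Fin K, (Y + (1 + G) * sf t) :=
        Finset.sum_le_sum fun i _ => hcomp i
      _ = K * (Y + (1 + G) * sf t) := by
        rw [Finset.sum_const, Finset.card_univ, Fintype.card_fin, nsmul_eq_mul]
      _ = K₀ * sf t + ε := by rw [hK₀def, hεdef]; ring
  have hsfB : ∀ t ∈ Icc (0:ℝ) T, sf t ≤ B := by
    intro t ht
    have hg := le_gronwallBound_of_liminf_deriv_right_le (f := sf)
      (f' := fun t => ∑ i, Gt γ y K B t (v t) i) (δ := δ) (K := K₀) (ε := ε) (a := 0) (b := T)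
      hsfc ?_ ?_ hsum_le t ht
    · refine hg.trans ?_
      rw [sub_zero]
      exact hgronB t ht
    · intro x hx r hr
      refine ((hsfd x hx).liminf_right_slope_le hr).mono fun z hz => ?_
      simpa [slope, vsub_eq_sub, smul_eq_mul] using hz
    · simp only [hsfdef]
      rw [hv0]
  have hcl_id : ∀ t ∈ Icc (0:ℝ) T, (fun j => cl B (v t j)) = v t := by
    intro t ht
    funext j
    refine cl_eq (hnn t ht j) ?_
    refine le_trans ?_ (hsfB t ht)
    exact Finset.single_le_sum (fun i _ => hnn t ht i) (Finset.mem_univ j)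
  refine ⟨v, hv0, fun t ht => ?_⟩
  have hd := hvd t ht
  unfold Gt at hd
  rwa [hcl_id t ht] at hd
lemma sol_unique (K : ℕ) (γ : ℕ → ℝ) (y : ℝ → ℝ) {T : ℝ} (hT : 0 ≤ T)
    {u w : ℝ → Fin K → ℝ}
    (huc : ContinuousOn u (Icc 0 T))
    (hud : ∀ t ∈ Ico (0:ℝ) T, HasDerivWithinAt u (Ft γ y K t (u t)) (Ici t) t)
    (hwc : ContinuousOn w (Icc 0 T))
    (hwd : ∀ t ∈ Ico (0:ℝ) T, HasDerivWithinAt w (Ft γ y K t (w t)) (Ici t) t)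
    (h0 : u 0 = w 0) : EqOn u w (Icc 0 T) := by
  obtain ⟨R₁, hR₁⟩ :=
    (isCompact_Icc (a := (0:ℝ)) (b := T)).exists_bound_of_continuousOn huc
  obtain ⟨R₂, hR₂⟩ :=
    (isCompact_Icc (a := (0:ℝ)) (b := T)).exists_bound_of_continuousOn hwc
  set R : ℝ := max R₁ R₂ with hRdef
  have hR0 : 0 ≤ R :=
    (norm_nonneg (u 0)).trans ((hR₁ 0 ⟨le_refl _, hT⟩).trans (le_max_left _ _))
  set G : ℝ := ∑ k ∈ Finset.range (K + 1), |γ k| with hGdef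
  have hG0 : 0 ≤ G := Finset.sum_nonneg fun _ _ => abs_nonneg _
  have hGk : ∀ i : Fin K, |γ ((i : ℕ) + 1)| ≤ G := fun i =>
    Finset.single_le_sum (f := fun k => |γ k|) (fun _ _ => abs_nonneg _)
      (Finset.mem_range.2 (by have := i.isLt; omega))
  have hlip : ∀ t : ℝ,
      LipschitzOnWith ((1 + G + 2 * R).toNNReal) (Ft γ y K t) (Metric.closedBall 0 R) := by
    intro t
    apply LipschitzOnWith.of_dist_le_mul
    intro p hp q hq
    rw [Real.coe_toNNReal _ (by linarith), dist_pi_le_iff (by positivity)]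
    intro i
    rw [Real.dist_eq]
    have hpj : ∀ j, |p j| ≤ R := fun j => by
      have := norm_le_pi_norm p j
      rw [Real.norm_eq_abs] at this
      exact this.trans (mem_closedBall_zero_iff.1 hp)
    have hqj : ∀ j, |q j| ≤ R := fun j => by
      have := norm_le_pi_norm q j
      rw [Real.norm_eq_abs] at this
      exact this.trans (mem_closedBall_zero_iff.1 hq)
    have hpq : ∀ j, |p j - q j| ≤ dist p q := fun j => by
      rw [← Real.dist_eq]
      exact dist_le_pi_dist p q j
    exact Ft_lip_component γ y t hGk hG0 hR0 dist_nonneg hpj hqj hpq i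
  exact ODE_solution_unique_of_mem_Icc_right (s := fun _ => Metric.closedBall 0 R) (fun t _ => hlip t)
    huc hud
    (fun t ht => mem_closedBall_zero_iff.2
      ((hR₁ t (Ico_subset_Icc_self ht)).trans (le_max_left _ _)))
    hwc hwd
    (fun t ht => mem_closedBall_zero_iff.2
      ((hR₂ t (Ico_subset_Icc_self ht)).trans (le_max_right _ _)))
    h0
lemma exists_sol_global (K : ℕ) (hK : 1 ≤ K) (γ : ℕ → ℝ) (y : ℝ → ℝ) (hyc : Continuous y)
    (hy : ∀ t ≥ (0:ℝ), 0 ≤ y t) (a0 : Fin K → ℝ) (ha0 : ∀ i, 0 ≤ a0 i) :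
    ∃ w : ℝ → Fin K → ℝ, w 0 = a0 ∧
      ∀ t ∈ Ici (0:ℝ), HasDerivWithinAt w (Ft γ y K t (w t)) (Ici 0) t := by
  choose sol hsol0 hsold using fun n : ℕ =>
    exists_sol_Icc K hK γ y hyc hy a0 ha0 ((n : ℝ) + 1) (by positivity)
  have hcont : ∀ n : ℕ, ContinuousOn (sol n) (Icc 0 ((n : ℝ) + 1)) :=
    fun n t ht => (hsold n t ht).continuousWithinAt
  have hder' : ∀ n : ℕ, ∀ t ∈ Ico (0:ℝ) ((n : ℝ) + 1),
      HasDerivWithinAt (sol n) (Ft γ y K t (sol n t)) (Ici t) t := fun n t ht =>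
    (hsold n t (Ico_subset_Icc_self ht)).mono_of_mem_nhdsWithin (Icc_mem_nhdsGE_of_mem ht)
  have hagree : ∀ m n : ℕ, m ≤ n → EqOn (sol m) (sol n) (Icc 0 ((m : ℝ) + 1)) := by
    intro m n hmn
    have hmn' : ((m : ℝ) + 1) ≤ ((n : ℝ) + 1) := by exact_mod_cast by omega
    refine sol_unique K γ y (by positivity) (hcont m) (hder' m)
      ((hcont n).mono (Icc_subset_Icc_right hmn')) ?_ ?_
    · intro t ht
      exact hder' n t ⟨ht.1, lt_of_lt_of_le ht.2 hmn'⟩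
    · rw [hsol0 m, hsol0 n]
  refine ⟨fun t => sol ⌊t⌋₊ t, ?_, ?_⟩
  · show sol ⌊(0:ℝ)⌋₊ 0 = a0
    rw [Nat.floor_zero, hsol0 0]
  · intro t ht
    set n := ⌊t⌋₊ with hndef
    have htn : t < (n : ℝ) + 1 := Nat.lt_floor_add_one t
    have hkey : ∀ s ∈ Icc (0:ℝ) ((n : ℝ) + 1), sol ⌊s⌋₊ s = sol n s := by
      intro s hs
      rcases le_total ⌊s⌋₊ n with h | h
      · exact hagree _ _ h ⟨hs.1, (Nat.lt_floor_add_one s).le⟩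
      · exact (hagree _ _ h ⟨hs.1, hs.2⟩).symm
    have hmem : Ici (0:ℝ) ∩ Iio ((n : ℝ) + 1) ∈ 𝓝[Ici 0] t :=
      inter_mem_nhdsWithin _ (Iio_mem_nhds htn)
    have h1 : HasDerivWithinAt (sol n) (Ft γ y K t (sol n t)) (Ici 0) t :=
      (hsold n t ⟨ht, htn.le⟩).mono_of_mem_nhdsWithin
        (mem_of_superset hmem fun s hs => ⟨hs.1, hs.2.le⟩)
    have heq : (fun s => sol ⌊s⌋₊ s) =ᶠ[𝓝[Ici 0] t] sol n :=
      eventually_of_mem hmem fun s hs => hkey s ⟨hs.1, hs.2.le⟩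
    have hwt : sol ⌊t⌋₊ t = sol n t := hkey t ⟨ht, htn.le⟩
    have h2 := h1.congr_of_eventuallyEq heq hwt
    rwa [← hwt] at h2

end

end OdeAux

open OdeAux

/-- `IsSol K γ y a x` says that `x = (x₀, x₂, …, x_{K+1})` solves the ODE
`x'(t) = F(y(t), x(t))` on `[0,∞)` with initial condition `a`, where the
components are indexed by `{0, 2, …, K+1}`, `F₀ = F_{K+1} = x_K`,
`F₂ = y + (γ₂ - x₀)x₂` and `F_k = x_{k-1} + (γ_k - x₀)x_k` for `3 ≤ k ≤ K`
(with the convention `x₁ := y`, so that `F₂` fits the same pattern, and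
`x_K` is interpreted as `y` when `K = 1`). -/
def IsSol (K : ℕ) (γ : ℕ → ℝ) (y : ℝ → ℝ) (a : ℕ → ℝ) (x : ℕ → ℝ → ℝ) : Prop :=
  (∀ k, x k 0 = a k) ∧
  (∀ t ∈ Ici (0:ℝ),
    HasDerivWithinAt (x 0) (if K = 1 then y t else x K t) (Ici 0) t) ∧
  (∀ t ∈ Ici (0:ℝ),
    HasDerivWithinAt (x (K+1)) (if K = 1 then y t else x K t) (Ici 0) t) ∧
  (∀ k, 2 ≤ k → k ≤ K → ∀ t ∈ Ici (0:ℝ),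
    HasDerivWithinAt (x k)
      ((if k = 2 then y t else x (k-1) t) + (γ k - x 0 t) * x k t) (Ici 0) t)

/-- For any continuous nonnegative forcing `y` and nonnegative initial condition `a`,
the ODE `x' = F(y, x)`, `x(0) = a` has a unique solution defined on all of `[0,∞)`
(uniqueness for the relevant components, indexed by `{0} ∪ {2,…,K+1}`). -/
theorem ode_exists_unique (K : ℕ) (hK : 1 ≤ K) (γ : ℕ → ℝ)
    (y : ℝ → ℝ) (hyc : Continuous y) (hy : ∀ t ≥ (0:ℝ), 0 ≤ y t)
    (a : ℕ → ℝ) (ha : ∀ k, 0 ≤ a k) :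
    ∃ x : ℕ → ℝ → ℝ, IsSol K γ y a x ∧
      ∀ x' : ℕ → ℝ → ℝ, IsSol K γ y a x' →
        ∀ k, (k = 0 ∨ (2 ≤ k ∧ k ≤ K + 1)) → ∀ t ≥ (0:ℝ), x' k t = x k t := by
  have hK0 : 0 < K := hK
  set a0 : Fin K → ℝ := fun i => if (i : ℕ) = 0 then a 0 else a ((i : ℕ) + 1) with ha0def
  have ha0 : ∀ i, 0 ≤ a0 i := fun i => by
    simp only [ha0def]; split_ifs <;> apply ha
  obtain ⟨w, hw0, hwd⟩ := OdeAux.exists_sol_global K hK γ y hyc hy a0 ha0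
  set x : ℕ → ℝ → ℝ := fun k t =>
    if k = 0 then w t ⟨0, hK0⟩
    else if h : 2 ≤ k ∧ k ≤ K then w t ⟨k - 1, by omega⟩
    else if k = K + 1 then a (K + 1) - a 0 + w t ⟨0, hK0⟩
    else a k with hxdef
  have hx0 : ∀ t, x 0 t = w t ⟨0, hK0⟩ := fun t => by simp [hxdef]
  have hxk : ∀ k (h2 : 2 ≤ k) (hk : k ≤ K) (t : ℝ), x k t = w t ⟨k - 1, by omega⟩ := by
    intro k h2 hk t
    simp only [hxdef]
    rw [if_neg (by omega : ¬ k = 0), dif_pos ⟨h2, hk⟩]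
  have hxK1 : ∀ t, x (K+1) t = a (K + 1) - a 0 + w t ⟨0, hK0⟩ := fun t => by
    simp only [hxdef]
    rw [if_neg (by omega : ¬ K + 1 = 0), dif_neg (by omega : ¬(2 ≤ K + 1 ∧ K + 1 ≤ K)),
      if_pos trivial]
  have hFt0 : ∀ t, Ft γ y K t (w t) ⟨0, hK0⟩ = if K = 1 then y t else x K t := by
    intro t
    by_cases hK1 : K = 1
    · simp [Ft, hK1]
    · have h2K : 2 ≤ K := by omega
      rw [hxk K h2K (le_refl K) t]
      simp only [Ft]
      try dsimp only
      rw [if_pos trivial, if_neg hK1]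
  refine ⟨x, ⟨?_, ?_, ?_, ?_⟩, ?_⟩
  · -- initial conditions
    intro k
    by_cases hk0 : k = 0
    · subst hk0
      rw [hx0 0, hw0]
      simp [ha0def]
    · by_cases hkK : 2 ≤ k ∧ k ≤ K
      · rw [hxk k hkK.1 hkK.2 0, hw0]
        simp only [ha0def]
        try dsimp only
        rw [if_neg (by omega : ¬ k - 1 = 0), show k - 1 + 1 = k from by omega]
      · by_cases hkK1 : k = K + 1
        · subst hkK1
          rw [hxK1 0, hw0]
          have : a0 ⟨0, hK0⟩ = a 0 := by simp [ha0def]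
          rw [this]
          ring
        · simp only [hxdef]
          rw [if_neg hk0, dif_neg hkK, if_neg hkK1]
  · -- derivative of x 0
    intro t ht
    have h := hasDerivWithinAt_pi.1 (hwd t ht) ⟨0, hK0⟩
    rw [← hFt0 t, show x 0 = fun s => w s ⟨0, hK0⟩ from funext hx0]
    exact h
  · -- derivative of x (K+1)
    intro t ht
    have h := (hasDerivWithinAt_pi.1 (hwd t ht) ⟨0, hK0⟩).const_add (a (K + 1) - a 0)
    rw [← hFt0 t, show x (K+1) = fun s => a (K + 1) - a 0 + w s ⟨0, hK0⟩ from funext hxK1]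
    exact h
  · -- derivatives of middle components
    intro k h2 hkK t ht
    have hik : k - 1 < K := by omega
    have h := hasDerivWithinAt_pi.1 (hwd t ht) ⟨k - 1, hik⟩
    have hval : Ft γ y K t (w t) ⟨k - 1, hik⟩
        = (if k = 2 then y t else x (k-1) t) + (γ k - x 0 t) * x k t := by
      simp only [Ft]
      try dsimp only
      rw [if_neg (by omega : ¬ k - 1 = 0), hx0 t, hxk k h2 hkK t,
        show k - 1 + 1 = k from by omega]
      congr 1
      by_cases hk2 : k = 2
      · rw [if_pos (by omega : k - 1 = 1), if_pos hk2]
      · rw [if_neg (by omega : ¬ k - 1 = 1), if_neg hk2, hxk (k-1) (by omega) (by omega) t]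
    rw [← hval, show x k = fun s => w s ⟨k - 1, hik⟩ from funext (fun s => hxk k h2 hkK s)]
    exact h
  · -- uniqueness
    intro x' hx'
    obtain ⟨hx'0, hx'd0, hx'dK1, hx'dk⟩ := hx'
    set u : ℝ → Fin K → ℝ := fun t i =>
      if (i : ℕ) = 0 then x' 0 t else x' ((i : ℕ) + 1) t with hudef
    have hu0 : u 0 = a0 := funext fun i => by
      simp only [hudef, ha0def]
      split_ifs
      exacts [hx'0 0, hx'0 _]
    have hud : ∀ t ∈ Ici (0:ℝ), HasDerivWithinAt u (Ft γ y K t (u t)) (Ici 0) t := by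
      intro t ht
      rw [hasDerivWithinAt_pi]
      intro i
      by_cases hi : (i : ℕ) = 0
      · have hfun : (fun s => u s i) = x' 0 := funext fun s => by simp [hudef, hi]
        have hval : Ft γ y K t (u t) i = if K = 1 then y t else x' K t := by
          simp only [Ft, hudef]
          try dsimp only
          rw [if_pos hi]
          by_cases hK1 : K = 1
          · rw [if_pos hK1, if_pos hK1]
          · rw [if_neg hK1, if_neg hK1, if_neg (by omega : ¬ K - 1 = 0),
              show K - 1 + 1 = K from by omega]
        rw [hfun, hval]
        exact hx'd0 t ht
      · have hiK : (i : ℕ) < K := i.isLt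
        have hfun : (fun s => u s i) = x' ((i : ℕ) + 1) := funext fun s => by
          simp [hudef, hi]
        have hval : Ft γ y K t (u t) i
            = (if (i : ℕ) + 1 = 2 then y t else x' ((i : ℕ) + 1 - 1) t)
              + (γ ((i : ℕ) + 1) - x' 0 t) * x' ((i : ℕ) + 1) t := by
          simp only [Ft, hudef]
          try dsimp only
          rw [if_neg hi, if_pos trivial, if_neg hi]
          congr 1
          by_cases h1 : (i : ℕ) = 1
          · rw [if_pos h1, if_pos (by omega)]
          · rw [if_neg h1, if_neg (by omega : ¬ (i:ℕ) - 1 = 0),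
              if_neg (by omega : ¬ (i:ℕ) + 1 = 2),
              show (i:ℕ) - 1 + 1 = (i:ℕ) + 1 - 1 from by omega]
        rw [hfun, hval]
        exact hx'dk ((i : ℕ) + 1) (by omega) (by omega) t ht
    have hucont : ∀ T : ℝ, ContinuousOn u (Icc 0 T) :=
      fun T s hs => ((hud s hs.1).continuousWithinAt).mono fun z hz => hz.1
    have hwcont : ∀ T : ℝ, ContinuousOn w (Icc 0 T) :=
      fun T s hs => ((hwd s hs.1).continuousWithinAt).mono fun z hz => hz.1
    have huweq : ∀ t : ℝ, 0 ≤ t → u t = w t := by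
      intro t ht
      refine sol_unique K γ y ht (hucont t)
        (fun s hs => (hud s hs.1).mono (Ici_subset_Ici.2 hs.1)) (hwcont t)
        (fun s hs => (hwd s hs.1).mono (Ici_subset_Ici.2 hs.1))
        (hu0.trans hw0.symm) ⟨ht, le_refl t⟩
    have hu0t : ∀ t : ℝ, 0 ≤ t → x' 0 t = w t ⟨0, hK0⟩ := by
      intro t ht
      calc x' 0 t = u t ⟨0, hK0⟩ := by simp [hudef]
        _ = w t ⟨0, hK0⟩ := by rw [huweq t ht]
    intro k hk t ht
    rcases hk with hk0 | ⟨hk2, hkK1⟩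
    · subst hk0
      rw [hu0t t ht, hx0 t]
    · by_cases hkK : k ≤ K
      · have hik : k - 1 < K := by omega
        calc x' k t = u t ⟨k - 1, hik⟩ := by
              simp only [hudef]
              try dsimp only
              rw [if_neg (by omega : ¬ k - 1 = 0), show k - 1 + 1 = k from by omega]
          _ = w t ⟨k - 1, hik⟩ := by rw [huweq t ht]
          _ = x k t := (hxk k hk2 hkK t).symm
      · have hkeq : k = K + 1 := by omega
        subst hkeq
        have hccont : ContinuousOn (fun s => x' (K+1) s - x' 0 s) (Icc 0 t) := by
          apply ContinuousOn.sub
          · exact fun s hs => ((hx'dK1 s hs.1).continuousWithinAt).mono fun z hz => hz.1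
          · exact fun s hs => ((hx'd0 s hs.1).continuousWithinAt).mono fun z hz => hz.1
        have hdz : ∀ s ∈ Ico (0:ℝ) t,
            HasDerivWithinAt (fun s => x' (K+1) s - x' 0 s) 0 (Ici s) s := by
          intro s hs
          have := (((hx'dK1 s hs.1).mono (Ici_subset_Ici.2 hs.1)).sub
            ((hx'd0 s hs.1).mono (Ici_subset_Ici.2 hs.1)))
          have h2 : HasDerivWithinAt (x' (K+1) - x' 0) 0 (Ici s) s := by simpa using this
          exact h2
        have hconst := constant_of_has_deriv_right_zero hccont hdz t ⟨ht, le_refl t⟩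
        simp only [hx'0 (K+1), hx'0 0] at hconst
        rw [hxK1 t, ← hu0t t ht]
        linarith
end

section
/- Let x = (x₀, x₂, …, x_{K+1}) solve the ODE x'(t) = F(y(t), x(t)) on [0,∞) with nonnegative initial condition and y: [0,∞) → [0,∞) continuous. Then x(t) ∈ [0,∞)^{K+1} for all t ≥ 0; in particular x₀ is non-decreasing and its limit x₀(∞) as t → ∞ exists in [0,∞]. -/
open Set Filter MeasureTheory intervalIntegral

lemma mono_of_derivIci (x d : ℝ → ℝ)
    (hd : ∀ t ∈ Ici (0:ℝ), HasDerivWithinAt x (d t) (Ici 0) t)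
    (hnn : ∀ t ∈ Ici (0:ℝ), 0 ≤ d t) : MonotoneOn x (Ici 0) := by
  apply monotoneOn_of_deriv_nonneg (convex_Ici 0)
    (fun t ht => (hd t ht).continuousWithinAt)
  · intro t ht
    rw [interior_Ici] at ht
    exact ((hd t (mem_Ici.2 (le_of_lt (mem_Ioi.1 ht)))).hasDerivAt (Ici_mem_nhds ht)).differentiableAt.differentiableWithinAt
  · intro t ht
    rw [interior_Ici] at ht
    rw [((hd t (mem_Ici.2 (le_of_lt (mem_Ioi.1 ht)))).hasDerivAt (Ici_mem_nhds ht)).deriv]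
    exact hnn t (mem_Ici.2 (le_of_lt (mem_Ioi.1 ht)))

lemma nonneg_of_linODE (f g x : ℝ → ℝ) (hx0 : 0 ≤ x 0)
    (hf : ∀ t ∈ Ici (0:ℝ), 0 ≤ f t) (hg : ContinuousOn g (Ici 0))
    (hd : ∀ t ∈ Ici (0:ℝ), HasDerivWithinAt x (f t + g t * x t) (Ici 0) t) :
    ∀ t ∈ Ici (0:ℝ), 0 ≤ x t := by
  set g' : ℝ → ℝ := fun t => g (max t 0) with hg'
  have hg'c : Continuous g' :=
    hg.comp_continuous (continuous_id.max continuous_const) (fun t => mem_Ici.2 (le_max_right _ _))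
  set G : ℝ → ℝ := fun t => ∫ u in (0:ℝ)..t, g' u with hG
  have hGd : ∀ t, HasDerivAt G (g' t) t := fun t =>
    integral_hasDerivAt_right (hg'c.intervalIntegrable _ _)
      hg'c.aestronglyMeasurable.stronglyMeasurableAtFilter hg'c.continuousAt
  set h : ℝ → ℝ := fun t => x t * Real.exp (-(G t)) with hh
  have hhd : ∀ t ∈ Ici (0:ℝ),
      HasDerivWithinAt h (f t * Real.exp (-(G t))) (Ici 0) t := by
    intro t ht
    have hE : HasDerivWithinAt (fun t => Real.exp (-(G t)))
        (Real.exp (-(G t)) * (-(g' t))) (Ici 0) t :=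
      (((hGd t).hasDerivWithinAt (s := Ici 0)).neg).exp
    have := (hd t ht).mul hE
    refine this.congr_deriv ?_
    have hgt : g' t = g t := by simp [hg', max_eq_left (mem_Ici.1 ht)]
    rw [hgt]; ring
  have hmono : MonotoneOn h (Ici 0) := by
    apply mono_of_derivIci h (fun t => f t * Real.exp (-(G t))) hhd
    exact fun t ht => mul_nonneg (hf t ht) (Real.exp_pos _).le
  intro t ht
  have h0 : 0 ≤ h 0 := mul_nonneg hx0 (Real.exp_pos _).le
  have := hmono (self_mem_Ici) ht ht
  have hht : 0 ≤ h t := le_trans h0 this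
  have := mul_nonneg hht (Real.exp_pos (G t)).le
  calc (0:ℝ) ≤ h t * Real.exp (G t) := this
    _ = x t := by rw [hh]; simp [mul_assoc, ← Real.exp_add]

/-- If `x` solves the ODE with nonnegative initial condition and continuous
nonnegative forcing `y`, then `x(t) ∈ [0,∞)^{K+1}` for all `t ≥ 0`; in particular
`x₀` is non-decreasing on `[0,∞)` and its limit as `t → ∞` exists in `[0,∞]`. -/
theorem ode_nonneg (K : ℕ) (hK : 1 ≤ K) (γ : ℕ → ℝ)
    (y : ℝ → ℝ) (hyc : Continuous y) (hy : ∀ t ≥ (0:ℝ), 0 ≤ y t)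
    (a : ℕ → ℝ) (ha : ∀ k, 0 ≤ a k)
    (x : ℕ → ℝ → ℝ) (hx : IsSol K γ y a x) :
    (∀ k, (k = 0 ∨ (2 ≤ k ∧ k ≤ K + 1)) → ∀ t ≥ (0:ℝ), 0 ≤ x k t) ∧
    MonotoneOn (x 0) (Ici (0:ℝ)) ∧
    ∃ L : EReal, Tendsto (fun t => ((x 0 t : ℝ) : EReal)) atTop (nhds L) ∧ 0 ≤ L := by
  obtain ⟨hinit, hd0, hdK1, hdk⟩ := hx
  have hx0c : ContinuousOn (x 0) (Ici 0) := fun t ht => (hd0 t ht).continuousWithinAt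
  have hmid : ∀ k, 2 ≤ k → k ≤ K → ∀ t ∈ Ici (0:ℝ), 0 ≤ x k t := by
    intro k
    induction k using Nat.strong_induction_on with
    | _ k ih =>
      intro h2 hKk
      apply nonneg_of_linODE (fun t => if k = 2 then y t else x (k-1) t)
        (fun t => γ k - x 0 t) (x k) ((hinit k) ▸ ha k)
      · intro t ht
        by_cases h : k = 2
        · simp [h]; exact hy t ht
        · simp only [h, if_false]
          have h3 : 3 ≤ k := by omega
          exact ih (k-1) (by omega) (by omega) (by omega) t ht
      · exact continuousOn_const.sub hx0c
      · exact hdk k h2 hKk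
  have hKnn : ∀ t ∈ Ici (0:ℝ), 0 ≤ (if K = 1 then y t else x K t) := by
    intro t ht
    by_cases h : K = 1
    · simp [h]; exact hy t ht
    · simp only [h, if_false]
      exact hmid K (by omega) le_rfl t ht
  have hmono0 : MonotoneOn (x 0) (Ici 0) := mono_of_derivIci _ _ hd0 hKnn
  have hmonoK1 : MonotoneOn (x (K+1)) (Ici 0) := mono_of_derivIci _ _ hdK1 hKnn
  have h0nn : ∀ t ∈ Ici (0:ℝ), 0 ≤ x 0 t := fun t ht =>
    le_trans ((hinit 0) ▸ ha 0) (hmono0 self_mem_Ici ht ht)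
  have hK1nn : ∀ t ∈ Ici (0:ℝ), 0 ≤ x (K+1) t := fun t ht =>
    le_trans ((hinit (K+1)) ▸ ha (K+1)) (hmonoK1 self_mem_Ici ht ht)
  refine ⟨?_, hmono0, ?_⟩
  · rintro k (rfl | ⟨h2, hK1⟩) t ht
    · exact h0nn t ht
    · rcases lt_or_eq_of_le hK1 with h | rfl
      · exact hmid k h2 (by omega) t ht
      · exact hK1nn t ht
  · set φ : ℝ → EReal := fun t => ((x 0 (max t 0) : ℝ) : EReal) with hφ
    have hφmono : Monotone φ := by
      intro s t hst
      exact EReal.coe_le_coe_iff.2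
        (hmono0 (mem_Ici.2 (le_max_right _ _)) (mem_Ici.2 (le_max_right _ _)) (max_le_max hst le_rfl))
    refine ⟨⨆ t, φ t, ?_, ?_⟩
    · refine (tendsto_atTop_iSup hφmono).congr' ?_
      filter_upwards [eventually_ge_atTop (0:ℝ)] with t ht
      simp [hφ, max_eq_left ht]
    · refine le_trans ?_ (le_iSup φ 0)
      simp only [hφ, max_self]
      exact EReal.coe_nonneg.2 (h0nn 0 self_mem_Ici)
end

section
/- Let x solve x'(t) = F(0, x(t)) with nonnegative initial condition, assume x₀(∞) is finite with x₀(∞) > γ_k, and suppose φ(t) e^{-∫₀^t (x₀ - γ_{k-1})} → 0 as t → ∞ for some continuous nonnegative function φ. Then ψ(t) := (∫₀^t φ(u) e^{(γ_{k-1} - γ_k) u} du) · e^{-∫₀^t (x₀ - γ_k)} also tends to 0 as t → ∞. -/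
open Set Filter intervalIntegral MeasureTheory

/-- If `x₀` is non-decreasing on `[0,∞)` with finite limit `L > γ_k`, and a
continuous nonnegative `φ` satisfies `φ(t) e^{-∫₀ᵗ (x₀ - γ_{k-1})} → 0`, then
`ψ(t) = (∫₀ᵗ φ(u) e^{(γ_{k-1} - γ_k)u} du) e^{-∫₀ᵗ (x₀ - γ_k)} → 0` as `t → ∞`. -/
theorem aux_limit_zero (x0 : ℝ → ℝ) (γk γkm : ℝ) (L : ℝ)
    (hmono : MonotoneOn x0 (Ici (0:ℝ))) (hx0 : ∀ t ≥ (0:ℝ), 0 ≤ x0 t)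
    (hcont : ContinuousOn x0 (Ici (0:ℝ)))
    (hlim : Tendsto x0 atTop (nhds L)) (hL : γk < L)
    (φ : ℝ → ℝ) (hφc : Continuous φ) (hφnn : ∀ t ≥ (0:ℝ), 0 ≤ φ t)
    (hφ : Tendsto
      (fun t => φ t * Real.exp (-∫ u in (0:ℝ)..t, (x0 u - γkm))) atTop (nhds 0)) :
    Tendsto
      (fun t => (∫ u in (0:ℝ)..t, φ u * Real.exp ((γkm - γk) * u)) *
        Real.exp (-∫ u in (0:ℝ)..t, (x0 u - γk))) atTop (nhds 0) := by
  set κ : ℝ := (L - γk) / 2 with hκdef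
  have hκ : 0 < κ := by simp only [hκdef]; linarith
  set g : ℝ → ℝ := fun t => ∫ u in (0:ℝ)..t, (x0 u - γk) with hgdef
  set f : ℝ → ℝ := fun u => φ u * Real.exp ((γkm - γk) * u) with hfdef
  have hfc : Continuous f := hφc.mul (Real.continuous_exp.comp (continuous_const.mul continuous_id))
  -- integrability of x0 - c on intervals within [0, ∞)
  have hx0i : ∀ (c a b : ℝ), 0 ≤ a → 0 ≤ b →
      IntervalIntegrable (fun u => x0 u - c) volume a b := by
    intro c a b ha hb
    apply ContinuousOn.intervalIntegrable
    apply (hcont.sub continuousOn_const).mono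
    intro x hx
    have := (Set.mem_uIcc.mp hx)
    rcases this with h | h
    · exact le_trans ha h.1
    · exact le_trans hb h.1
  -- identity: g u = (∫₀ᵘ (x0 - γkm)) + (γkm - γk) * u for u ≥ 0
  have hgh : ∀ u : ℝ, 0 ≤ u →
      g u = (∫ v in (0:ℝ)..u, (x0 v - γkm)) + (γkm - γk) * u := by
    intro u hu
    have h1 : (fun v => x0 v - γk) = fun v => (x0 v - γkm) + (γkm - γk) := by
      funext v; ring
    have h2 : g u = (∫ v in (0:ℝ)..u, ((x0 v - γkm) + (γkm - γk))) := by
      rw [hgdef]; rw [h1]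
    rw [h2, intervalIntegral.integral_add (hx0i γkm 0 u le_rfl hu)
      intervalIntegrable_const, intervalIntegral.integral_const]
    simp [smul_eq_mul]; ring
  -- identity: f u = (φ u * e^{-H u}) * e^{g u} for u ≥ 0
  have hfg : ∀ u : ℝ, 0 ≤ u →
      f u = (φ u * Real.exp (-∫ v in (0:ℝ)..u, (x0 v - γkm))) * Real.exp (g u) := by
    intro u hu
    rw [hgh u hu, hfdef]
    rw [mul_assoc, ← Real.exp_add,
      show -(∫ v in (0:ℝ)..u, (x0 v - γkm)) + ((∫ v in (0:ℝ)..u, (x0 v - γkm)) + (γkm - γk) * u)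
        = (γkm - γk) * u by ring]
  -- derivative of g at points u > 0
  have hgderiv : ∀ u : ℝ, 0 < u → HasDerivAt g (x0 u - γk) u := by
    intro u hu
    have hco : ContinuousOn (fun v => x0 v - γk) (Ioi (0:ℝ)) :=
      (hcont.sub continuousOn_const).mono (fun x hx => Set.mem_Ici.mpr (le_of_lt (Set.mem_Ioi.mp hx)))
    exact intervalIntegral.integral_hasDerivAt_right (hx0i γk 0 u le_rfl hu.le)
      (hco.stronglyMeasurableAtFilter isOpen_Ioi u hu)
      ((hcont.continuousAt (Ici_mem_nhds hu)).sub continuousAt_const)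
  have hgc : ∀ u : ℝ, 0 < u → ContinuousAt g u := fun u hu => (hgderiv u hu).continuousAt
  -- main ε-argument
  rw [NormedAddCommGroup.tendsto_nhds_zero]
  intro E hE
  -- choose threshold T
  have h1 : ∀ᶠ u in atTop, γk + κ < x0 u := hlim.eventually_const_lt (by linarith)
  have h2 : ∀ᶠ u in atTop,
      ‖φ u * Real.exp (-∫ v in (0:ℝ)..u, (x0 v - γkm))‖ < E * κ / 2 :=
    NormedAddCommGroup.tendsto_nhds_zero.mp hφ (E * κ / 2) (by positivity)
  obtain ⟨t₀, ht₀⟩ := eventually_atTop.mp (h1.and h2)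
  set T : ℝ := max t₀ 1 with hTdef
  have hT1 : (1:ℝ) ≤ T := le_max_right _ _
  have hT0 : (0:ℝ) ≤ T := by linarith
  have hTpos : (0:ℝ) < T := by linarith
  have hTprop : ∀ u ≥ T, γk + κ < x0 u ∧
      ‖φ u * Real.exp (-∫ v in (0:ℝ)..u, (x0 v - γkm))‖ < E * κ / 2 := by
    intro u hu
    exact ht₀ u (le_trans (le_max_left _ _) hu)
  -- g grows at least linearly beyond T
  have hgrow : ∀ t ≥ T, κ * (t - T) + g T ≤ g t := by
    intro t ht
    have hsplit : g T + ∫ u in T..t, (x0 u - γk) = g t :=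
      intervalIntegral.integral_add_adjacent_intervals (hx0i γk 0 T le_rfl hT0)
        (hx0i γk T t hT0 (by linarith))
    have hmon : (∫ u in T..t, (fun _ => κ) u) ≤ ∫ u in T..t, (x0 u - γk) := by
      apply intervalIntegral.integral_mono_on ht intervalIntegrable_const
        (hx0i γk T t hT0 (by linarith))
      intro u hu
      have := (hTprop u hu.1).1
      linarith
    rw [intervalIntegral.integral_const, smul_eq_mul, mul_comm] at hmon
    linarith
  -- exp(-g t) → 0
  have hgtop : Tendsto g atTop atTop := by
    apply tendsto_atTop_mono' atTop (eventually_atTop.mpr ⟨T, hgrow⟩)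
    have : Tendsto (fun t : ℝ => κ * (t - T)) atTop atTop := by
      apply Tendsto.const_mul_atTop hκ
      exact tendsto_atTop_add_const_right atTop (-T) tendsto_id
    exact tendsto_atTop_add_const_right atTop (g T) this
  have htend0 : Tendsto (fun t => Real.exp (-g t)) atTop (nhds 0) :=
    Real.tendsto_exp_atBot.comp (tendsto_neg_atTop_atBot.comp hgtop)
  set C : ℝ := ∫ u in (0:ℝ)..T, f u with hCdef
  have hterm1 : Tendsto (fun t => C * Real.exp (-g t)) atTop (nhds 0) := by
    simpa using htend0.const_mul C
  have hterm1' : ∀ᶠ t in atTop, ‖C * Real.exp (-g t)‖ < E / 2 :=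
    NormedAddCommGroup.tendsto_nhds_zero.mp hterm1 (E / 2) (by positivity)
  filter_upwards [hterm1', eventually_ge_atTop T] with t hsmall htT
  have ht0 : (0:ℝ) ≤ t := by linarith
  -- continuity facts on [T, t]
  have hgcon : ContinuousOn (fun u => Real.exp (g u)) (Set.uIcc T t) := by
    intro u hu
    rw [Set.uIcc_of_le htT] at hu
    have : (0:ℝ) < u := lt_of_lt_of_le hTpos hu.1
    exact (Real.continuous_exp.continuousAt.comp (hgc u this)).continuousWithinAt
  have hx0con : ContinuousOn (fun u => x0 u - γk) (Set.uIcc T t) := by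
    apply (hcont.sub continuousOn_const).mono
    intro x hx
    rw [Set.uIcc_of_le htT] at hx
    exact le_trans hT0 hx.1
  have hrint : IntervalIntegrable (fun u => (x0 u - γk) * Real.exp (g u)) volume T t :=
    (hx0con.mul hgcon).intervalIntegrable
  have heint : IntervalIntegrable (fun u => Real.exp (g u)) volume T t :=
    hgcon.intervalIntegrable
  -- FTC: ∫_T^t (x0 - γk) e^{g} = e^{g t} - e^{g T}
  have hFTC : (∫ u in T..t, (x0 u - γk) * Real.exp (g u))
      = Real.exp (g t) - Real.exp (g T) := by
    apply intervalIntegral.integral_eq_sub_of_hasDerivAt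
    · intro u hu
      rw [Set.uIcc_of_le htT] at hu
      have hupos : (0:ℝ) < u := lt_of_lt_of_le hTpos hu.1
      have := (hgderiv u hupos).exp
      simpa [mul_comm] using this
    · exact hrint
  -- κ ∫ e^g ≤ e^{g t}
  have hexpint : κ * (∫ u in T..t, Real.exp (g u)) ≤ Real.exp (g t) := by
    have hmon : (∫ u in T..t, κ * Real.exp (g u))
        ≤ ∫ u in T..t, (x0 u - γk) * Real.exp (g u) := by
      apply intervalIntegral.integral_mono_on htT
        (heint.const_mul κ) hrint
      intro u hu
      have h := (hTprop u hu.1).1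
      have : κ ≤ x0 u - γk := by linarith
      exact mul_le_mul_of_nonneg_right this (Real.exp_nonneg _)
    rw [intervalIntegral.integral_const_mul] at hmon
    rw [hFTC] at hmon
    have : (0:ℝ) < Real.exp (g T) := Real.exp_pos _
    linarith
  -- pointwise bound on f beyond T
  have hfbound : ∀ u ∈ Set.Icc T t, f u ≤ (E * κ / 2) * Real.exp (g u) := by
    intro u hu
    have hu0 : (0:ℝ) ≤ u := le_trans hT0 hu.1
    rw [hfg u hu0]
    have h := (hTprop u hu.1).2
    have hb : φ u * Real.exp (-∫ v in (0:ℝ)..u, (x0 v - γkm)) ≤ E * κ / 2 :=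
      le_of_lt (lt_of_le_of_lt (le_abs_self _) h)
    exact mul_le_mul_of_nonneg_right hb (Real.exp_nonneg _)
  -- bound ∫_T^t f
  have hfTt : (∫ u in T..t, f u) ≤ (E * κ / 2) * ∫ u in T..t, Real.exp (g u) := by
    have := intervalIntegral.integral_mono_on htT (hfc.intervalIntegrable T t)
      (heint.const_mul (E * κ / 2)) hfbound
    rwa [intervalIntegral.integral_const_mul] at this
  have hfTt0 : 0 ≤ ∫ u in T..t, f u := by
    apply intervalIntegral.integral_nonneg htT
    intro u hu
    have hu0 : (0:ℝ) ≤ u := le_trans hT0 hu.1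
    exact mul_nonneg (hφnn u hu0) (Real.exp_nonneg _)
  -- split the integral
  have hsplit : (∫ u in (0:ℝ)..t, f u) = C + ∫ u in T..t, f u :=
    (intervalIntegral.integral_add_adjacent_intervals
      (hfc.intervalIntegrable 0 T) (hfc.intervalIntegrable T t)).symm
  -- final bound
  have hB : (∫ u in T..t, f u) * Real.exp (-g t) ≤ E / 2 := by
    have h1 : (∫ u in T..t, f u) * Real.exp (-g t)
        ≤ ((E * κ / 2) * ∫ u in T..t, Real.exp (g u)) * Real.exp (-g t) :=
      mul_le_mul_of_nonneg_right hfTt (Real.exp_nonneg _)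
    have h2 : ((E * κ / 2) * ∫ u in T..t, Real.exp (g u)) * Real.exp (-g t)
        ≤ ((E / 2) * Real.exp (g t)) * Real.exp (-g t) := by
      apply mul_le_mul_of_nonneg_right _ (Real.exp_nonneg _)
      have : (E * κ / 2) * (∫ u in T..t, Real.exp (g u)) =
          (E / 2) * (κ * ∫ u in T..t, Real.exp (g u)) := by ring
      rw [this]
      exact mul_le_mul_of_nonneg_left hexpint (by positivity)
    have h3 : ((E / 2) * Real.exp (g t)) * Real.exp (-g t) = E / 2 := by
      rw [mul_assoc, ← Real.exp_add]
      simp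
    linarith
  have hB0 : 0 ≤ (∫ u in T..t, f u) * Real.exp (-g t) :=
    mul_nonneg hfTt0 (Real.exp_nonneg _)
  show ‖(∫ u in (0:ℝ)..t, f u) * Real.exp (-g t)‖ < E
  rw [hsplit, add_mul]
  rw [Real.norm_eq_abs]
  calc |C * Real.exp (-g t) + (∫ u in T..t, f u) * Real.exp (-g t)|
      ≤ |C * Real.exp (-g t)| + |(∫ u in T..t, f u) * Real.exp (-g t)| := abs_add_le _ _
    _ < E / 2 + E / 2 := by
        apply add_lt_add_of_lt_of_le
        · exact hsmall
        · rw [abs_of_nonneg hB0]; exact hB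
    _ = E := by ring
end
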